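/- For coprime positive integers p, q with q odd, the quantity c(q,p) = (1/p)·Σ_{k odd, 1 ≤ k ≤ 2p-1} cot(πk/(2p))·cot(πqk/(2p)) is an integer. -/

import Mathlib

open Finset Real

open Classical in
/-- The sawtooth function: 0 on integers, fractional part minus 1/2 otherwise. -/
noncomputable def saw (x : ℝ) : ℝ :=
  if ∃ n : ℤ, x = n then 0 else Int.fract x - 1/2

/-- The Dedekind sum s(q,p). -/
noncomputable def dedekindSum (q : ℤ) (p : ℕ) : ℝ :=
  ∑ μ ∈ Finset.range p, saw ((μ : ℝ) / p) * saw ((q : ℝ) * μ / p)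

/-- The Dedekind–Rademacher sum s(q,p;x,y). -/
noncomputable def drSum (q : ℤ) (p : ℕ) (x y : ℝ) : ℝ :=
  ∑ μ ∈ Finset.range p, saw (((μ : ℝ) + y) / p) * saw ((q : ℝ) * ((μ : ℝ) + y) / p + x)


section AuxCotSum
open Complex

-- sum of j x^j identity
lemma jsum (x : ℂ) (n : ℕ) :
    (x - 1) * ∑ j ∈ range n, (j : ℂ) * x ^ j
      = ((n : ℂ) - 1) * x ^ n + 1 - ∑ j ∈ range n, x ^ j := by
  induction n with
  | zero => simp
  | succ n ih =>
    rw [Finset.sum_range_succ, Finset.sum_range_succ (f := fun j => x ^ j)]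
    push_cast
    ring_nf
    ring_nf at ih
    linear_combination ih

lemma geom_zero (x : ℂ) (n : ℕ) (hn : x ^ n = 1) (hx : x ≠ 1) :
    ∑ j ∈ range n, x ^ j = 0 := by
  have h := geom_sum_mul x n
  rw [hn, sub_self] at h
  exact (mul_eq_zero.mp h).resolve_right (sub_ne_zero.mpr hx)

lemma Aval (p : ℕ) (hp : 0 < p) (x : ℂ) (h1 : x ^ (2 * p) = 1) (hx : x ≠ 1) :
    (x - 1) * ∑ j ∈ range (2 * p), (j : ℂ) * x ^ j = 2 * p := by
  rw [jsum, h1, geom_zero x (2*p) h1 hx]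
  push_cast
  ring

lemma frac_eq (p : ℕ) (hp : 0 < p) (x : ℂ) (h1 : x ^ (2 * p) = 1) (hx : x ≠ 1) :
    (x + 1) / (x - 1) = 1 + (p : ℂ)⁻¹ * ∑ j ∈ range (2 * p), (j : ℂ) * x ^ j := by
  have hx1 : x - 1 ≠ 0 := sub_ne_zero.mpr hx
  have hpc : (p : ℂ) ≠ 0 := Nat.cast_ne_zero.mpr hp.ne'
  rw [div_eq_iff hx1]
  have h := Aval p hp x h1 hx
  field_simp
  linear_combination -h

noncomputable def zet (p : ℕ) : ℂ := Complex.exp (Real.pi * Complex.I / p)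

lemma zet_pow (p n : ℕ) : (zet p) ^ n = Complex.exp (n * (Real.pi * Complex.I / p)) := by
  rw [zet, ← Complex.exp_nat_mul]

lemma zet_pow_p (p : ℕ) (hp : 0 < p) : (zet p) ^ p = -1 := by
  rw [zet_pow]
  have hpc : (p : ℂ) ≠ 0 := Nat.cast_ne_zero.mpr hp.ne'
  have : (p : ℂ) * (Real.pi * Complex.I / p) = Real.pi * Complex.I := by
    field_simp
  rw [this, Complex.exp_pi_mul_I]

lemma zet_pow_2p (p : ℕ) (hp : 0 < p) : (zet p) ^ (2 * p) = 1 := by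
  rw [pow_mul', zet_pow_p p hp]
  norm_num

lemma charSum (p : ℕ) (hp : 0 < p) (r : ℕ) :
    ∑ k ∈ range p, (zet p) ^ ((2 * k + 1) * r)
      = if p ∣ r then (p : ℂ) * (-1 : ℂ) ^ (r / p) else 0 := by
  have hpc : (p : ℂ) ≠ 0 := Nat.cast_ne_zero.mpr hp.ne'
  have hsplit : ∀ k, (zet p) ^ ((2 * k + 1) * r) = (zet p) ^ r * ((zet p) ^ (2 * r)) ^ k := by
    intro k
    rw [← pow_mul, ← pow_add]
    ring_nf
  simp only [hsplit]
  rw [← Finset.mul_sum]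
  by_cases hd : p ∣ r
  · obtain ⟨s, rfl⟩ := hd
    have h1 : (zet p) ^ (2 * (p * s)) = 1 := by
      rw [show 2 * (p * s) = 2 * p * s by ring, pow_mul, zet_pow_2p p hp, one_pow]
    have h2 : (zet p) ^ (p * s) = (-1 : ℂ) ^ s := by
      rw [pow_mul, zet_pow_p p hp]
    rw [if_pos ⟨s, rfl⟩, h1, h2, Nat.mul_div_cancel_left s hp]
    simp [mul_comm]
  · rw [if_neg hd]
    have hw1 : (zet p) ^ (2 * r) ≠ 1 := by
      intro h
      rw [zet_pow, Complex.exp_eq_one_iff] at h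
      obtain ⟨n, hn⟩ := h
      have hπ : (Real.pi : ℂ) * Complex.I ≠ 0 :=
        mul_ne_zero (Complex.ofReal_ne_zero.mpr Real.pi_ne_zero) Complex.I_ne_zero
      have hn2 : ((2 * r : ℕ) : ℂ) * (Real.pi * Complex.I) / p = n * (2 * Real.pi * Complex.I) := by
        rw [← hn]; ring
      rw [div_eq_iff hpc] at hn2
      have hcast : ((2 * r : ℕ) : ℂ) = n * (2 * p) := by
        apply mul_right_cancel₀ hπ
        linear_combination hn2
      have hint : (2 * (r : ℤ)) = n * (2 * p) := by exact_mod_cast hcast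
      have : ((p : ℤ)) ∣ (r : ℤ) := ⟨n, by linarith⟩
      exact hd (by exact_mod_cast this)
    have hwp : ((zet p) ^ (2 * r)) ^ p = 1 := by
      rw [← pow_mul, show 2 * r * p = 2 * p * r by ring, pow_mul, zet_pow_2p p hp, one_pow]
    have := geom_sum_mul ((zet p) ^ (2 * r)) p
    rw [hwp, sub_self] at this
    have := (mul_eq_zero.mp this).resolve_right (sub_ne_zero.mpr hw1)
    rw [this, mul_zero]

noncomputable def Afun (p : ℕ) (x : ℂ) : ℂ := ∑ j ∈ Finset.range (2 * p), (j : ℂ) * x ^ j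


lemma frac_eqA (p : ℕ) (hp : 0 < p) (x : ℂ) (h1 : x ^ (2 * p) = 1) (hx : x ≠ 1) :
    (x + 1) / (x - 1) = 1 + (p : ℂ)⁻¹ * Afun p x := by
  unfold Afun
  exact frac_eq p hp x h1 hx

lemma cot_as_E (θ : ℝ) (E : ℂ) (hE : Complex.exp (2 * θ * Complex.I) = E) (hne : E ≠ 1) :
    (Real.cot θ : ℂ) = Complex.I * (E + 1) / (E - 1) := by
  have hu : Complex.exp ((θ : ℂ) * Complex.I) ≠ 0 := Complex.exp_ne_zero _
  have hE2 : E = Complex.exp ((θ : ℂ) * Complex.I) ^ 2 := by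
    rw [← hE, sq, ← Complex.exp_add]; ring_nf
  have hs : Complex.sin (θ : ℂ) ≠ 0 := by
    intro h
    rw [Complex.sin] at h
    simp only [neg_mul, Complex.exp_neg] at h
    have h1 := (div_eq_zero_iff.mp h).resolve_right two_ne_zero
    have h2 := (mul_eq_zero.mp h1).resolve_right Complex.I_ne_zero
    apply hne
    rw [hE2]
    field_simp at h2
    linear_combination -h2
  rw [Complex.ofReal_cot, Complex.cot_eq_cos_div_sin]
  have hEne : E - 1 ≠ 0 := sub_ne_zero.mpr hne
  rw [div_eq_div_iff hs hEne]
  rw [Complex.sin, Complex.cos]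
  simp only [neg_mul, Complex.exp_neg]
  rw [hE2]
  field_simp
  ring_nf
  simp only [Complex.I_sq]
  ring

lemma mod_helper (p : ℕ) (hp : 0 < p) (b r : ℕ) (hb : b < p) (hr : r < p) :
    ((b + r) % p = 0 ↔ b = (p - r) % p) := by
  rcases Nat.eq_zero_or_pos r with rfl | hr0
  · rw [Nat.sub_zero, Nat.mod_self, Nat.add_zero, Nat.mod_eq_of_lt hb]
  · rw [Nat.mod_eq_of_lt (by omega : p - r < p)]
    rcases Nat.lt_or_ge (b + r) p with h | h
    · rw [Nat.mod_eq_of_lt h]; omega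
    · have h2 : (b + r) % p = b + r - p := by
        rw [Nat.mod_eq_sub_mod h, Nat.mod_eq_of_lt (by omega)]
      rw [h2]; omega

lemma dvd_iff_eq (p m : ℕ) (hp : 0 < p) (j : ℕ) (hj : j < 2 * p) :
    (p ∣ j + m ↔ (j = (p - m % p) % p ∨ j = (p - m % p) % p + p)) := by
  set j0 := (p - m % p) % p with hj0
  have hj0lt : j0 < p := Nat.mod_lt _ hp
  have key : p ∣ j + m ↔ j % p = j0 := by
    rw [Nat.dvd_iff_mod_eq_zero, Nat.add_mod, mod_helper p hp (j % p) (m % p)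
      (Nat.mod_lt _ hp) (Nat.mod_lt _ hp)]
  rw [key]
  constructor
  · intro h
    have hdm := Nat.div_add_mod j p
    have hd2 : j / p < 2 := by
      by_contra hc
      push_neg at hc
      have : 2 * p ≤ p * (j / p) := by
        calc 2 * p = p * 2 := by ring
        _ ≤ p * (j / p) := Nat.mul_le_mul_left p hc
      omega
    interval_cases h2 : j / p <;> omega
  · rintro (rfl | rfl)
    · exact Nat.mod_eq_of_lt hj0lt
    · rw [Nat.add_mod_right, Nat.mod_eq_of_lt hj0lt]

lemma twoPointSum (p : ℕ) (hp : 0 < p) (f : ℕ → ℂ)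
    (h0 : ∀ j ∈ Finset.range (2 * p), j ∉ ({0, p} : Finset ℕ) → f j = 0) :
    ∑ j ∈ Finset.range (2 * p), f j = f 0 + f p := by
  have hsub : ({0, p} : Finset ℕ) ⊆ Finset.range (2 * p) := by
    intro x hx
    simp only [Finset.mem_insert, Finset.mem_singleton] at hx
    rw [Finset.mem_range]
    omega
  rw [← Finset.sum_subset hsub h0, Finset.sum_pair hp.ne]

lemma innerJ (p : ℕ) (hp : 0 < p) (m : ℕ) :
    ∑ j ∈ Finset.range (2 * p), (j : ℂ) * (if p ∣ j + m then (p : ℂ) * (-1 : ℂ) ^ ((j + m) / p) else 0)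
      = -(p : ℂ) ^ 2 * (-1 : ℂ) ^ (((p - m % p) % p + m) / p) := by
  set j0 := (p - m % p) % p with hj0
  have hj0lt : j0 < p := Nat.mod_lt _ hp
  have hsub : ({j0, j0 + p} : Finset ℕ) ⊆ Finset.range (2 * p) := by
    intro x hx
    simp only [Finset.mem_insert, Finset.mem_singleton] at hx
    rw [Finset.mem_range]
    omega
  rw [← Finset.sum_subset hsub ?_]
  · rw [Finset.sum_pair (by omega : j0 ≠ j0 + p)]
    have h1 : p ∣ j0 + m := (dvd_iff_eq p m hp j0 (by omega)).mpr (Or.inl rfl)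
    have h2 : p ∣ j0 + p + m := by
      have := (dvd_iff_eq p m hp (j0 + p) (by omega)).mpr (Or.inr rfl)
      exact this
    rw [if_pos h1, if_pos h2]
    have hdiv : (j0 + p + m) / p = (j0 + m) / p + 1 := by
      rw [show j0 + p + m = (j0 + m) + p by ring, Nat.add_div_right _ hp]
    rw [hdiv, pow_succ]
    push_cast
    ring
  · intro x hx hnx
    simp only [Finset.mem_insert, Finset.mem_singleton] at hnx
    push_neg at hnx
    rw [if_neg, mul_zero]
    intro hd
    rcases (dvd_iff_eq p m hp x (Finset.mem_range.mp hx)).mp hd with rfl | rfl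
    · exact hnx.1 rfl
    · exact hnx.2 rfl

lemma Usum (p q : ℕ) (hp : 0 < p) (hodd : Odd q) :
    ∑ l ∈ Finset.range (2 * p), (l : ℂ) * (-1 : ℂ) ^ (((p - (q * l) % p) % p + q * l) / p)
      = -(p : ℂ) * ∑ l ∈ Finset.range p, (-1 : ℂ) ^ (((p - (q * l) % p) % p + q * l) / p) := by
  rw [two_mul, Finset.sum_range_add]
  have hs : ∀ l, ((p - (q * (p + l)) % p) % p + q * (p + l)) / p
      = ((p - (q * l) % p) % p + q * l) / p + q := by
    intro l
    have hmod : q * (p + l) % p = q * l % p := by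
      rw [Nat.mul_add, Nat.add_comm, Nat.mul_comm q p, Nat.add_mul_mod_self_left]
    rw [hmod, show (p - q * l % p) % p + q * (p + l) = ((p - q * l % p) % p + q * l) + p * q by ring,
      Nat.add_mul_div_left _ _ hp]
  have hterm : ∀ l ∈ Finset.range p,
      ((p + l : ℕ) : ℂ) * (-1 : ℂ) ^ (((p - (q * (p + l)) % p) % p + q * (p + l)) / p)
        = ((p + l : ℕ) : ℂ) * (-(-1 : ℂ) ^ (((p - (q * l) % p) % p + q * l) / p)) := by
    intro l _
    rw [hs l, pow_add, hodd.neg_one_pow]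
    ring
  rw [Finset.sum_congr rfl hterm, ← Finset.sum_add_distrib]
  have : ∀ l ∈ Finset.range p,
      (l : ℂ) * (-1 : ℂ) ^ (((p - (q * l) % p) % p + q * l) / p)
        + ((p + l : ℕ) : ℂ) * (-(-1 : ℂ) ^ (((p - (q * l) % p) % p + q * l) / p))
      = -(p : ℂ) * (-1 : ℂ) ^ (((p - (q * l) % p) % p + q * l) / p) := by
    intro l _
    push_cast
    ring
  rw [Finset.sum_congr rfl this, ← Finset.mul_sum]

lemma sumA (p : ℕ) (hp : 0 < p) :
    ∑ k ∈ range p, Afun p ((zet p) ^ (2 * k + 1)) = -(p : ℂ) ^ 2 := by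
  unfold Afun
  rw [Finset.sum_comm]
  have hterm : ∀ j : ℕ, ∑ k ∈ range p, (j : ℂ) * ((zet p) ^ (2 * k + 1)) ^ j
      = (j : ℂ) * (if p ∣ j then (p : ℂ) * (-1 : ℂ) ^ (j / p) else 0) := by
    intro j
    rw [← Finset.mul_sum, ← charSum p hp j]
    simp_rw [← pow_mul]
  rw [Finset.sum_congr rfl fun j _ => hterm j]
  rw [twoPointSum p hp _ ?_]
  · rw [if_pos (dvd_refl p), Nat.div_self hp]
    simp only [Nat.cast_zero, zero_mul, zero_add, pow_one, mul_neg_one, pow_two]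
    ring
  · intro j hj hnj
    simp only [Finset.mem_insert, Finset.mem_singleton] at hnj
    push_neg at hnj
    rw [Finset.mem_range] at hj
    rw [if_neg, mul_zero]
    rintro ⟨s, rfl⟩
    have : s < 2 := by
      by_contra hc
      push_neg at hc
      have : p * 2 ≤ p * s := Nat.mul_le_mul_left p hc
      omega
    interval_cases s
    · exact hnj.1 (by simp)
    · exact hnj.2 (by simp)

lemma sumB (p q : ℕ) (hp : 0 < p) (hcop : Nat.Coprime p q) (hodd : Odd q) :
    ∑ k ∈ range p, Afun p (((zet p) ^ (2 * k + 1)) ^ q) = -(p : ℂ) ^ 2 := by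
  unfold Afun
  rw [Finset.sum_comm]
  have hterm : ∀ j : ℕ, ∑ k ∈ range p, (j : ℂ) * (((zet p) ^ (2 * k + 1)) ^ q) ^ j
      = (j : ℂ) * (if p ∣ q * j then (p : ℂ) * (-1 : ℂ) ^ ((q * j) / p) else 0) := by
    intro j
    rw [← Finset.mul_sum, ← charSum p hp (q * j)]
    simp_rw [← pow_mul, Nat.mul_assoc]
  rw [Finset.sum_congr rfl fun j _ => hterm j]
  rw [twoPointSum p hp _ ?_]
  · rw [if_pos (Dvd.intro_left q rfl), Nat.mul_div_cancel _ hp]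
    rw [hodd.neg_one_pow]
    simp only [Nat.cast_zero, zero_mul, zero_add, mul_neg_one, pow_two]
    ring
  · intro j hj hnj
    simp only [Finset.mem_insert, Finset.mem_singleton] at hnj
    push_neg at hnj
    rw [Finset.mem_range] at hj
    rw [if_neg, mul_zero]
    intro hd
    have hdj : p ∣ j := hcop.dvd_of_dvd_mul_left hd
    obtain ⟨s, rfl⟩ := hdj
    have : s < 2 := by
      by_contra hc
      push_neg at hc
      have : p * 2 ≤ p * s := Nat.mul_le_mul_left p hc
      omega
    interval_cases s
    · exact hnj.1 (by simp)
    · exact hnj.2 (by simp)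

lemma sumAB (p q : ℕ) (hp : 0 < p) (hodd : Odd q) :
    ∑ k ∈ range p, Afun p ((zet p) ^ (2 * k + 1)) * Afun p (((zet p) ^ (2 * k + 1)) ^ q)
      = (p : ℂ) ^ 3 * ∑ l ∈ range p, (-1 : ℂ) ^ (((p - (q * l) % p) % p + q * l) / p) := by
  have step1 : ∀ k, Afun p ((zet p) ^ (2 * k + 1)) * Afun p (((zet p) ^ (2 * k + 1)) ^ q)
      = ∑ j ∈ range (2 * p), ∑ l ∈ range (2 * p),
          ((j : ℂ) * (l : ℂ)) * (zet p) ^ ((2 * k + 1) * (j + q * l)) := by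
    intro k
    unfold Afun
    rw [Finset.sum_mul_sum]
    refine Finset.sum_congr rfl fun j _ => Finset.sum_congr rfl fun l _ => ?_
    rw [← pow_mul, ← pow_mul, ← pow_mul,
      show (2 * k + 1) * (j + q * l) = (2 * k + 1) * j + (2 * k + 1) * (q * l) by ring, pow_add]
    ring
  calc ∑ k ∈ range p, Afun p ((zet p) ^ (2 * k + 1)) * Afun p (((zet p) ^ (2 * k + 1)) ^ q)
      = ∑ k ∈ range p, ∑ j ∈ range (2 * p), ∑ l ∈ range (2 * p),
          ((j : ℂ) * (l : ℂ)) * (zet p) ^ ((2 * k + 1) * (j + q * l)) :=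
        Finset.sum_congr rfl fun k _ => step1 k
    _ = ∑ j ∈ range (2 * p), ∑ k ∈ range p, ∑ l ∈ range (2 * p),
          ((j : ℂ) * (l : ℂ)) * (zet p) ^ ((2 * k + 1) * (j + q * l)) := Finset.sum_comm
    _ = ∑ j ∈ range (2 * p), ∑ l ∈ range (2 * p), ∑ k ∈ range p,
          ((j : ℂ) * (l : ℂ)) * (zet p) ^ ((2 * k + 1) * (j + q * l)) :=
        Finset.sum_congr rfl fun j _ => Finset.sum_comm
    _ = ∑ l ∈ range (2 * p), ∑ j ∈ range (2 * p), ∑ k ∈ range p,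
          ((j : ℂ) * (l : ℂ)) * (zet p) ^ ((2 * k + 1) * (j + q * l)) := Finset.sum_comm
    _ = ∑ l ∈ range (2 * p), (l : ℂ) * ∑ j ∈ range (2 * p), (j : ℂ) *
          (if p ∣ j + q * l then (p : ℂ) * (-1 : ℂ) ^ ((j + q * l) / p) else 0) := by
        refine Finset.sum_congr rfl fun l _ => ?_
        rw [Finset.mul_sum]
        refine Finset.sum_congr rfl fun j _ => ?_
        rw [← charSum p hp (j + q * l), Finset.mul_sum, Finset.mul_sum]
        refine Finset.sum_congr rfl fun k _ => ?_
        ring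
    _ = ∑ l ∈ range (2 * p), (l : ℂ) *
          (-(p : ℂ) ^ 2 * (-1 : ℂ) ^ (((p - (q * l) % p) % p + q * l) / p)) :=
        Finset.sum_congr rfl fun l _ => by rw [innerJ p hp (q * l)]
    _ = -(p : ℂ) ^ 2 * ∑ l ∈ range (2 * p), (l : ℂ) *
          (-1 : ℂ) ^ (((p - (q * l) % p) % p + q * l) / p) := by
        rw [Finset.mul_sum]
        exact Finset.sum_congr rfl fun l _ => by ring
    _ = (p : ℂ) ^ 3 * ∑ l ∈ range p, (-1 : ℂ) ^ (((p - (q * l) % p) % p + q * l) / p) := by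
        rw [Usum p q hp hodd]
        ring

end AuxCotSum

open Complex in
theorem cot_sum_integer (p q : ℕ) (hp : 0 < p) (hq : 0 < q)
    (hcop : Nat.Coprime p q) (hodd : Odd q) :
    ∃ m : ℤ, (1 / (p : ℝ)) * ∑ k ∈ Finset.range p,
        Real.cot (Real.pi * (2 * (k : ℝ) + 1) / (2 * p))
          * Real.cot (Real.pi * q * (2 * (k : ℝ) + 1) / (2 * p)) = m := by
  have hpc : (p : ℂ) ≠ 0 := Nat.cast_ne_zero.mpr hp.ne'
  have hpr : (p : ℝ) ≠ 0 := Nat.cast_ne_zero.mpr hp.ne'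
  set ζ := zet p with hζ
  have hξ2p : ∀ k : ℕ, (ζ ^ (2 * k + 1)) ^ (2 * p) = 1 := fun k => by
    rw [← pow_mul, mul_comm, pow_mul, zet_pow_2p p hp, one_pow]
  have hξp : ∀ k : ℕ, (ζ ^ (2 * k + 1)) ^ p = -1 := fun k => by
    rw [← pow_mul, mul_comm, pow_mul, zet_pow_p p hp, (odd_two_mul_add_one k).neg_one_pow]
  have hξne : ∀ k : ℕ, ζ ^ (2 * k + 1) ≠ 1 := fun k h => by
    have h2 := hξp k; rw [h, one_pow] at h2; norm_num at h2
  have hη2p : ∀ k : ℕ, ((ζ ^ (2 * k + 1)) ^ q) ^ (2 * p) = 1 := fun k => by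
    rw [← pow_mul, mul_comm q (2 * p), pow_mul, hξ2p k, one_pow]
  have hηp : ∀ k : ℕ, ((ζ ^ (2 * k + 1)) ^ q) ^ p = -1 := fun k => by
    rw [← pow_mul, mul_comm q p, pow_mul, hξp k, hodd.neg_one_pow]
  have hηne : ∀ k : ℕ, (ζ ^ (2 * k + 1)) ^ q ≠ 1 := fun k h => by
    have h2 := hηp k; rw [h, one_pow] at h2; norm_num at h2
  have hIR : ∀ x y : ℂ, Complex.I * (x + 1) / (x - 1) * (Complex.I * (y + 1) / (y - 1))
      = -((x + 1) / (x - 1) * ((y + 1) / (y - 1))) := by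
    intro x y
    rw [show Complex.I * (x + 1) / (x - 1) * (Complex.I * (y + 1) / (y - 1))
      = Complex.I * Complex.I * ((x + 1) / (x - 1) * ((y + 1) / (y - 1))) by ring,
      Complex.I_mul_I]
    ring
  have hterm : ∀ k ∈ range p,
      ((Real.cot (Real.pi * (2 * (k : ℝ) + 1) / (2 * p))
        * Real.cot (Real.pi * q * (2 * (k : ℝ) + 1) / (2 * p)) : ℝ) : ℂ)
      = -((1 + (p : ℂ)⁻¹ * Afun p (ζ ^ (2 * k + 1)))
          * (1 + (p : ℂ)⁻¹ * Afun p ((ζ ^ (2 * k + 1)) ^ q))) := by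
    intro k _
    have hEa : Complex.exp (2 * (Real.pi * (2 * (k : ℝ) + 1) / (2 * p) : ℝ) * Complex.I)
        = ζ ^ (2 * k + 1) := by
      rw [hζ, zet_pow]
      congr 1
      push_cast
      field_simp
    have hEb : Complex.exp (2 * (Real.pi * q * (2 * (k : ℝ) + 1) / (2 * p) : ℝ) * Complex.I)
        = (ζ ^ (2 * k + 1)) ^ q := by
      rw [← pow_mul, hζ, zet_pow]
      congr 1
      push_cast
      field_simp
    rw [Complex.ofReal_mul, cot_as_E _ _ hEa (hξne k), cot_as_E _ _ hEb (hηne k), hIR,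
      frac_eqA p hp _ (hξ2p k) (hξne k), frac_eqA p hp _ (hη2p k) (hηne k)]
  -- the expanded complex sum
  have hexpand : ∑ k ∈ range p, (1 + (p : ℂ)⁻¹ * Afun p (ζ ^ (2 * k + 1)))
        * (1 + (p : ℂ)⁻¹ * Afun p ((ζ ^ (2 * k + 1)) ^ q))
      = -(p : ℂ) + (p : ℂ) * ∑ l ∈ range p, (-1 : ℂ) ^ (((p - (q * l) % p) % p + q * l) / p) := by
    have h1 : ∀ k ∈ range p, (1 + (p : ℂ)⁻¹ * Afun p (ζ ^ (2 * k + 1)))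
        * (1 + (p : ℂ)⁻¹ * Afun p ((ζ ^ (2 * k + 1)) ^ q))
        = 1 + ((p : ℂ)⁻¹ * Afun p (ζ ^ (2 * k + 1))
          + ((p : ℂ)⁻¹ * Afun p ((ζ ^ (2 * k + 1)) ^ q)
            + (p : ℂ)⁻¹ ^ 2 * (Afun p (ζ ^ (2 * k + 1)) * Afun p ((ζ ^ (2 * k + 1)) ^ q)))) :=
      fun k _ => by ring
    rw [Finset.sum_congr rfl h1, Finset.sum_add_distrib, Finset.sum_add_distrib,
      Finset.sum_add_distrib, Finset.sum_const, Finset.card_range,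
      ← Finset.mul_sum, ← Finset.mul_sum, ← Finset.mul_sum,
      sumA p hp, sumB p q hp hcop hodd, sumAB p q hp hodd]
    field_simp
    ring
  set W : ℤ := ∑ l ∈ range p, (-1 : ℤ) ^ (((p - (q * l) % p) % p + q * l) / p) with hW
  have hVW : ((W : ℂ)) = ∑ l ∈ range p, (-1 : ℂ) ^ (((p - (q * l) % p) % p + q * l) / p) := by
    rw [hW]
    push_cast
    rfl
  have hre : (∑ k ∈ Finset.range p,
      Real.cot (Real.pi * (2 * (k : ℝ) + 1) / (2 * p))
        * Real.cot (Real.pi * q * (2 * (k : ℝ) + 1) / (2 * p)))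
      = (p : ℝ) - (p : ℝ) * (W : ℝ) := by
    apply Complex.ofReal_injective
    rw [Complex.ofReal_sum, Finset.sum_congr rfl hterm, Finset.sum_neg_distrib, hexpand, ← hVW]
    push_cast
    ring
  refine ⟨1 - W, ?_⟩
  rw [hre]
  push_cast
  field_simp
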